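/- The liquidity premium λ(q) = θ[u'(q) - c'(q)] / [(1-θ)u'(q) + θc'(q)] is strictly decreasing on any interval where u'' < 0, c'' ≥ 0, u' > 0 and u' > c' > 0. -/
import Mathlib


/-- The liquidity premium `λ q = θ(u' q - c' q)/((1-θ)u' q + θ c' q)` is strictly
decreasing on any interval where `u'' < 0`, `c'' ≥ 0`, and `u' > c' > 0`. -/
theorem stmt_2 (u c : ℝ → ℝ) (θ : ℝ) (I : Set ℝ)
    (hθ0 : 0 < θ) (hθ1 : θ ≤ 1)
    (hI : I.OrdConnected)
    (hu : Differentiable ℝ u) (hu' : Differentiable ℝ (deriv u))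
    (hc : Differentiable ℝ c) (hc' : Differentiable ℝ (deriv c))
    (h1 : ∀ q ∈ I, deriv c q < deriv u q)
    (h2 : ∀ q ∈ I, 0 < deriv c q)
    (h3 : ∀ q ∈ I, deriv (deriv u) q < 0)
    (h4 : ∀ q ∈ I, 0 ≤ deriv (deriv c) q)
    (lam : ℝ → ℝ)
    (hlam : lam = fun q => θ * (deriv u q - deriv c q) / ((1 - θ) * deriv u q + θ * deriv c q)) :
    StrictAntiOn lam I := by
  set f := deriv u with hf
  set g := deriv c with hg
  have hD : ∀ q ∈ I, 0 < (1 - θ) * f q + θ * g q := by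
    intro q hq
    have h2q := h2 q hq
    have h1q := h1 q hq
    nlinarith
  have hconv : Convex ℝ I := hI.convex
  have hcont : ContinuousOn lam I := by
    rw [hlam]
    apply ContinuousOn.div
    · exact (continuousOn_const.mul ((hu'.continuous.continuousOn).sub
        hc'.continuous.continuousOn))
    · exact ((continuousOn_const.mul hu'.continuous.continuousOn).add
        (continuousOn_const.mul hc'.continuous.continuousOn))
    · intro q hq; exact (hD q hq).ne'
  have hderiv : ∀ q ∈ interior I, deriv lam q < 0 := by
    intro q hq
    have hqI : q ∈ I := interior_subset hq
    have hDq := hD q hqI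
    have hN : HasDerivAt (fun x => θ * (f x - g x))
        (θ * (deriv f q - deriv g q)) q :=
      ((hu'.differentiableAt.hasDerivAt.sub hc'.differentiableAt.hasDerivAt)).const_mul θ
    have hDd : HasDerivAt (fun x => (1 - θ) * f x + θ * g x)
        ((1 - θ) * deriv f q + θ * deriv g q) q :=
      ((hu'.differentiableAt.hasDerivAt.const_mul (1 - θ)).add
        (hc'.differentiableAt.hasDerivAt.const_mul θ))
    have hL : HasDerivAt lam
        ((θ * (deriv f q - deriv g q) * ((1 - θ) * f q + θ * g q)
          - θ * (f q - g q) * ((1 - θ) * deriv f q + θ * deriv g q))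
          / ((1 - θ) * f q + θ * g q) ^ 2) q := by
      rw [hlam]
      exact hN.div hDd hDq.ne'
    rw [hL.deriv]
    have h1q := h1 q hqI
    have h2q := h2 q hqI
    have h3q := h3 q hqI
    have h4q := h4 q hqI
    apply div_neg_of_neg_of_pos
    · have hu'pos : 0 < f q := h2q.trans h1q
      nlinarith [mul_nonneg h4q hu'pos.le, mul_pos h2q (neg_pos.mpr h3q)]
    · positivity
  exact strictAntiOn_of_deriv_neg hconv hcont hderiv
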